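/- Let X be a set. For every finite subset σ of X there exists a finite set F of permutations of X such that every permutation g of X can be written as g = u ∘ f ∘ v with f ∈ F and u, v permutations of X fixing σ pointwise. Consequently, the permutation group S(X), equipped with the topology of pointwise convergence, is Roelcke precompact. -/

import Mathlib

open Cardinal in
lemma exists_perm_extend {X : Type*} {s : Set X} (hs : s.Finite) (J : s ↪ X) :
    ∃ v : Equiv.Perm X, ∀ x : s, v x = J x := by
  cases fintypeOrInfinite X with
  | inl _ => exact Cardinal.extend_function_finite J ⟨Equiv.refl X⟩
  | inr _ =>
    apply Cardinal.extend_function J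
    rw [← Cardinal.eq]
    haveI : Finite s := hs
    apply Cardinal.mk_compl_eq_mk_compl_infinite
    · exact (Set.Finite.lt_aleph0 hs).trans_le (Cardinal.aleph0_le_mk X)
    · exact ((Set.finite_range J).lt_aleph0).trans_le (Cardinal.aleph0_le_mk X)

lemma key {X : Type*} (σ : Finset X) (g f : Equiv.Perm X)
    (hpat : ∀ y ∈ σ, (g y ∈ σ ↔ f y ∈ σ) ∧ (g y ∈ σ → g y = f y)) :
    ∃ u v : Equiv.Perm X, (∀ x ∈ σ, u x = x) ∧ (∀ x ∈ σ, v x = x) ∧ g = u * f * v := by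
  classical
  set s : Set X := ↑σ ∪ (⇑g⁻¹ '' ↑σ) with hsdef
  have hs : s.Finite := σ.finite_toSet.union (σ.finite_toSet.image _)
  set J : X → X := fun x => if x ∈ σ then x else f⁻¹ (g x) with hJ
  -- key fact: for x ∈ s \ σ, J x ∉ σ
  have hout : ∀ x, x ∈ s → x ∉ (σ : Set X) → J x ∉ (σ : Set X) := by
    rintro x hx hxσ
    simp only [hJ]
    rw [if_neg (by simpa using hxσ)]
    intro hmem
    have hgx : g x ∈ σ := by
      rcases hx with hx | ⟨y, hy, rfl⟩
      · exact absurd hx hxσ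
      · simpa using hy
    -- z := f⁻¹ (g x) ∈ σ, f z = g x ∈ σ, pattern gives g z = f z = g x, so z = x ∈ σ
    set z := f⁻¹ (g x) with hz
    have hfz : f z = g x := by simp [hz]
    have := hpat z hmem
    have hgz : g z ∈ σ := by rw [this.1, hfz]; exact hgx
    have : g z = g x := by rw [(this.2 hgz), hfz]
    exact hxσ (by rwa [g.injective this] at hmem)
  have hinj : Set.InjOn J s := by
    intro a ha b hb hab
    by_cases haσ : a ∈ σ <;> by_cases hbσ : b ∈ σ
    · simpa [hJ, haσ, hbσ] using hab
    · exfalso; have := hout b hb (by simpa using hbσ); simp only [hJ] at this hab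
      rw [if_pos haσ] at hab; rw [← hab] at this; exact this (by simpa using haσ)
    · exfalso; have := hout a ha (by simpa using haσ); simp only [hJ] at this hab
      rw [if_pos hbσ] at hab; rw [hab] at this; exact this (by simpa using hbσ)
    · simp only [hJ, if_neg haσ, if_neg hbσ] at hab
      exact g.injective (f⁻¹.injective hab)
  obtain ⟨v, hv⟩ := exists_perm_extend hs ⟨fun x : s => J x, fun a b h => Subtype.ext (hinj a.2 b.2 h)⟩
  have hvσ : ∀ x ∈ σ, v x = x := by
    intro x hx
    have := hv ⟨x, Or.inl hx⟩
    simpa [hJ, hx] using this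
  refine ⟨g * v⁻¹ * f⁻¹, v, ?_, hvσ, by group⟩
  intro x hx
  -- u x = g (v⁻¹ (f⁻¹ x)); show v (g⁻¹ x) = f⁻¹ x
  have hmem : (g⁻¹ x : X) ∈ s := Or.inr ⟨x, hx, rfl⟩
  have hvg : v (g⁻¹ x) = f⁻¹ x := by
    have := hv ⟨g⁻¹ x, hmem⟩
    simp only [hJ, Function.Embedding.coeFn_mk] at this
    by_cases hgσ : (g⁻¹ x : X) ∈ σ
    · rw [this, if_pos hgσ]
      -- pattern: g (g⁻¹ x) = x ∈ σ so f (g⁻¹ x) = x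
      have hp := hpat _ hgσ
      have hgg : g (g⁻¹ x) ∈ σ := by simpa using hx
      have := hp.2 hgg
      simp only [Equiv.Perm.inv_def, Equiv.apply_symm_apply] at this
      conv_rhs => rw [this]
      rw [Equiv.Perm.inv_def g, Equiv.Perm.inv_def f, Equiv.symm_apply_apply]
    · rw [this, if_neg hgσ]; simp
  simp only [Equiv.Perm.mul_apply]
  rw [← hvg]
  simp

/-- For every finite subset `σ` of a set `X` there is a finite set `F` of permutations of
`X` such that every permutation `g` of `X` can be written as `g = u ∘ f ∘ v` with `f ∈ F`
and `u, v` permutations fixing `σ` pointwise.  Consequently the permutation group `S(X)`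
with the topology of pointwise convergence is Roelcke precompact. -/
theorem stmt8 {X : Type*} (σ : Finset X) :
    ∃ F : Finset (Equiv.Perm X), ∀ g : Equiv.Perm X, ∃ f ∈ F, ∃ u v : Equiv.Perm X,
      (∀ x ∈ σ, u x = x) ∧ (∀ x ∈ σ, v x = x) ∧ g = u * f * v := by
  classical
  set P : Equiv.Perm X → (↥σ → Option ↥σ) :=
    fun g x => if h : g x ∈ σ then some ⟨g x, h⟩ else none with hP
  set rep : (↥σ → Option ↥σ) → Equiv.Perm X :=
    fun p => if h : ∃ g, P g = p then h.choose else 1 with hrep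
  refine ⟨Finset.image rep Finset.univ, fun g => ?_⟩
  have hex : ∃ g', P g' = P g := ⟨g, rfl⟩
  refine ⟨rep (P g), Finset.mem_image_of_mem _ (Finset.mem_univ _), ?_⟩
  have hPf : P (rep (P g)) = P g := by
    rw [hrep]; simp only; rw [dif_pos hex]; exact hex.choose_spec
  set f := rep (P g) with hf
  have hpat : ∀ y ∈ σ, (g y ∈ σ ↔ f y ∈ σ) ∧ (g y ∈ σ → g y = f y) := by
    intro y hy
    have hthis := congrFun hPf ⟨y, hy⟩
    simp only [hP, Subtype.coe_mk] at hthis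
    by_cases hfy : f y ∈ σ <;> by_cases hgy : g y ∈ σ
    · rw [dif_pos hfy, dif_pos hgy] at hthis
      have heq : f y = g y := congrArg Subtype.val (Option.some.inj hthis)
      exact ⟨iff_of_true hgy hfy, fun _ => heq.symm⟩
    · rw [dif_pos hfy, dif_neg hgy] at hthis; simp at hthis
    · rw [dif_neg hfy, dif_pos hgy] at hthis; simp at hthis
    · exact ⟨iff_of_false hgy hfy, fun h => absurd h hgy⟩
  obtain ⟨u, v, hu, hv, hg⟩ := key σ g f hpat
  exact ⟨u, v, hu, hv, hg⟩
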